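/- If R0 = β((1-θ)/γI + θ/γC) < 1, then both roots of λ² + (γI + γC - β)λ + γIγC(1 - R0) = 0 have strictly negative real part. -/
import Mathlib

/-- A monic real quadratic with positive coefficients has all complex roots
with negative real part. -/
lemma aux_quadratic_neg_re (b c : ℝ) (hb : 0 < b) (hc : 0 < c) (z : ℂ)
    (h : z ^ 2 + (b : ℂ) * z + (c : ℂ) = 0) : z.re < 0 := by
  have h' := h
  rw [Complex.ext_iff] at h'
  simp [pow_two, Complex.mul_re, Complex.mul_im] at h'
  obtain ⟨h1, h2⟩ := h'
  by_contra hx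
  push_neg at hx
  have hy : z.im = 0 := by
    rcases mul_eq_zero.mp (show z.im * (z.re + z.re + b) = 0 by ring_nf; nlinarith [h2]) with h | h
    · exact h
    · nlinarith
  nlinarith [sq_nonneg z.re]

/-- If `R0 = β((1-θ)/γI + θ/γC) < 1`, then both (complex) roots of
`λ² + (γI + γC - β)λ + γIγC(1 - R0) = 0` have strictly negative real part. -/
theorem stmt_7 (β γI γC θ : ℝ) (hβ : 0 < β) (hγI : 0 < γI) (hγC : 0 < γC)
    (hθ0 : 0 ≤ θ) (hθ1 : θ ≤ 1)
    (hR0 : β * ((1 - θ) / γI + θ / γC) < 1) :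
    ∀ z : ℂ, z ^ 2 + (↑γI + ↑γC - ↑β) * z
        + ↑γI * ↑γC * (1 - ↑β * ((1 - ↑θ) / ↑γI + ↑θ / ↑γC)) = 0 →
      z.re < 0 := by
  intro z hz
  have hsum : 1 / (γI + γC) ≤ (1 - θ) / γI + θ / γC := by
    rw [div_add_div _ _ (ne_of_gt hγI) (ne_of_gt hγC), div_le_div_iff₀ (by positivity) (by positivity)]
    nlinarith [mul_nonneg (sub_nonneg.mpr hθ1) (mul_pos hγC hγC).le, mul_nonneg hθ0 (mul_pos hγI hγI).le]
  have hb : 0 < γI + γC - β := by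
    have : β * (1 / (γI + γC)) ≤ β * ((1 - θ) / γI + θ / γC) :=
      mul_le_mul_of_nonneg_left hsum hβ.le
    have hlt : β * (1 / (γI + γC)) < 1 := lt_of_le_of_lt this hR0
    rw [mul_one_div, div_lt_one (by positivity)] at hlt
    linarith
  have hc : 0 < γI * γC * (1 - β * ((1 - θ) / γI + θ / γC)) := by
    have : 0 < 1 - β * ((1 - θ) / γI + θ / γC) := by linarith
    positivity
  have := aux_quadratic_neg_re (γI + γC - β) (γI * γC * (1 - β * ((1 - θ) / γI + θ / γC)))
    hb hc z (by push_cast; convert hz using 2 <;> ring)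
  exact this
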